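/- Let M be a real symmetric 3×3 matrix, let v ∈ ℝ³ be a unit vector with M v = λ v for some λ ∈ ℝ, and set R̃ := 2 v vᵀ − I₃. Let θ ∈ (0, π] and let U be a nonempty finite set of unit vectors in ℝ³. Then tr((I₃ − R̃) M) − min_{u ∈ U} tr((I₃ − R̃ R_a(θ,u)) M) = (1 − cos θ) · max_{u ∈ U} Δ_M(u, v). In particular, for any δ < (1 − cos θ) · max_{u ∈ U} Δ_M(u, v), the left-hand side is strictly greater than δ. -/
import Mathlib


open Matrix

/-- The skew-symmetric matrix `x^×` with `x^× y = x × y`. -/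
noncomputable def crossMat (x : Fin 3 → ℝ) : Matrix (Fin 3) (Fin 3) ℝ :=
  !![0, -x 2, x 1; x 2, 0, -x 0; -x 1, x 0, 0]

/-- The angle-axis rotation `R_a(θ, u) = I + sin θ · u^× + (1 − cos θ) · (u^×)²`. -/
noncomputable def Ra (θ : ℝ) (u : Fin 3 → ℝ) : Matrix (Fin 3) (Fin 3) ℝ :=
  1 + Real.sin θ • crossMat u + (1 - Real.cos θ) • (crossMat u * crossMat u)

/-- `Δ_M(u, v) := uᵀ (tr(M_v) I₃ − M_v) u` where `M_v := M (I₃ − 2 v vᵀ)`. -/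
noncomputable def DeltaM (M : Matrix (Fin 3) (Fin 3) ℝ) (u v : Fin 3 → ℝ) : ℝ :=
  u ⬝ᵥ ((M * (1 - (2 : ℝ) • vecMulVec v v)).trace • (1 : Matrix (Fin 3) (Fin 3) ℝ)
      - M * (1 - (2 : ℝ) • vecMulVec v v)).mulVec u

lemma mul_vecMulVec3 (B : Matrix (Fin 3) (Fin 3) ℝ) (a b : Fin 3 → ℝ) :
    B * vecMulVec a b = vecMulVec (B.mulVec a) b := by
  ext i j
  simp [mul_apply, vecMulVec_apply, mulVec, dotProduct, Fin.sum_univ_three]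
  ring

lemma trace_mul_vecMulVec3 (B : Matrix (Fin 3) (Fin 3) ℝ) (a b : Fin 3 → ℝ) :
    (B * vecMulVec a b).trace = b ⬝ᵥ B.mulVec a := by
  simp [trace, diag, mul_apply, vecMulVec_apply, mulVec, dotProduct, Fin.sum_univ_three]
  ring

lemma crossMat_sq (u : Fin 3 → ℝ) (hu : u ⬝ᵥ u = 1) :
    crossMat u * crossMat u = vecMulVec u u - 1 := by
  simp only [dotProduct, Fin.sum_univ_three] at hu
  ext i j
  fin_cases i <;> fin_cases j <;>
    simp [crossMat, mul_apply, vecMulVec_apply, Fin.sum_univ_three, Matrix.one_apply] <;>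
    linarith [hu]

lemma trace_crossMat_mul (u : Fin 3 → ℝ) (M : Matrix (Fin 3) (Fin 3) ℝ) (hM : M.IsSymm) :
    (crossMat u * M).trace = 0 := by
  have h01 : M 0 1 = M 1 0 := hM.apply 1 0
  have h02 : M 0 2 = M 2 0 := hM.apply 2 0
  have h12 : M 1 2 = M 2 1 := hM.apply 2 1
  simp [trace, diag, mul_apply, crossMat, Fin.sum_univ_three]
  linear_combination u 2 * h01 - u 1 * h02 + u 0 * h12

lemma trace_crossMat_vecMulVec (u v : Fin 3 → ℝ) :
    (crossMat u * vecMulVec v v).trace = 0 := by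
  simp [trace, diag, mul_apply, crossMat, vecMulVec_apply, Fin.sum_univ_three]
  ring

lemma key (M : Matrix (Fin 3) (Fin 3) ℝ) (hMsym : M.IsSymm)
    (v : Fin 3 → ℝ) (lam : ℝ) (hev : M.mulVec v = lam • v)
    (θ : ℝ) (u : Fin 3 → ℝ) (hu : u ⬝ᵥ u = 1) :
    ((1 - ((2 : ℝ) • vecMulVec v v - 1)) * M).trace
      - ((1 - ((2 : ℝ) • vecMulVec v v - 1) * Ra θ u) * M).trace
      = (1 - Real.cos θ) * DeltaM M u v := by
  set A := vecMulVec v v with hA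
  set K := crossMat u with hK
  set Rt : Matrix (Fin 3) (Fin 3) ℝ := (2 : ℝ) • A - 1 with hRt
  have hMA : M * A = lam • A := by
    rw [hA, mul_vecMulVec3, hev]
    ext i j; simp [vecMulVec_apply]; ring
  -- expand the product
  have hexp : (1 - Rt * Ra θ u) * M
      = M - Rt * M - Real.sin θ • (Rt * (K * M))
        - (1 - Real.cos θ) • (Rt * (K * K * M)) := by
    rw [Ra, ← hK]
    simp only [mul_add, add_mul, sub_mul, one_mul, mul_one, mul_smul_comm, smul_mul_assoc,
      Matrix.mul_assoc]
    abel
  -- sin-term trace vanishes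
  have hs : (Rt * (K * M)).trace = 0 := by
    have h1 : (A * (K * M)).trace = 0 := by
      rw [trace_mul_comm, Matrix.mul_assoc, hMA, Matrix.mul_smul, trace_smul,
        trace_crossMat_vecMulVec, smul_zero]
    rw [hRt, Matrix.sub_mul, Matrix.smul_mul, trace_sub, trace_smul, h1, one_mul,
      trace_crossMat_mul u M hMsym]
    simp
  -- cos-term trace equals DeltaM
  have hN : M * (1 - (2 : ℝ) • A) = M - (2 * lam) • A := by
    rw [Matrix.mul_sub, mul_one, Matrix.mul_smul, hMA]
    module
  have hMRt : M * Rt = -(M - (2 * lam) • A) := by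
    rw [hRt, Matrix.mul_sub, mul_one, Matrix.mul_smul, hMA]
    module
  set N : Matrix (Fin 3) (Fin 3) ℝ := M - (2 * lam) • A with hNdef
  have hDelta : DeltaM M u v = N.trace - u ⬝ᵥ N.mulVec u := by
    rw [DeltaM, ← hA, hN, Matrix.sub_mulVec, dotProduct_sub, smul_mulVec,
      Matrix.one_mulVec, dotProduct_smul, smul_eq_mul, hu, mul_one]
  have hc : (Rt * (K * K * M)).trace = DeltaM M u v := by
    have e1 : K * K * M = vecMulVec u u * M - M := by
      rw [hK, crossMat_sq u hu, Matrix.sub_mul, one_mul]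
    have h2 : (Rt * (vecMulVec u u * M)).trace = u ⬝ᵥ (M * Rt).mulVec u := by
      rw [← Matrix.mul_assoc, trace_mul_comm, ← Matrix.mul_assoc, trace_mul_vecMulVec3]
    have h3 : (Rt * M).trace = -N.trace := by
      rw [trace_mul_comm, hMRt, trace_neg]
    rw [e1, Matrix.mul_sub, trace_sub, h2, h3, hMRt, hDelta]
    simp [Matrix.neg_mulVec]
    ring
  rw [hexp]
  simp only [Matrix.sub_mul, one_mul, trace_sub, trace_smul, smul_eq_mul, hs, hc]
  ring

/-- For a symmetric `M` with unit eigenvector `v`, `R̃ := 2vvᵀ − I`, `θ ∈ (0, π]` and a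
nonempty finite set `U` of unit vectors,
`tr((I − R̃)M) − min_{u ∈ U} tr((I − R̃ R_a(θ,u))M) = (1 − cos θ) · max_{u ∈ U} Δ_M(u, v)`;
in particular the left-hand side is `> δ` for any `δ < (1 − cos θ) · max_{u ∈ U} Δ_M(u, v)`. -/
theorem trace_gap_min_max
    (M : Matrix (Fin 3) (Fin 3) ℝ) (hMsym : M.IsSymm)
    (v : Fin 3 → ℝ) (lam : ℝ) (hv : v ⬝ᵥ v = 1) (hev : M.mulVec v = lam • v)
    (Rt : Matrix (Fin 3) (Fin 3) ℝ) (hRt : Rt = (2 : ℝ) • vecMulVec v v - 1)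
    (θ : ℝ) (hθ₀ : 0 < θ) (hθπ : θ ≤ Real.pi)
    (U : Finset (Fin 3 → ℝ)) (hUne : U.Nonempty) (hUunit : ∀ u ∈ U, u ⬝ᵥ u = 1) :
    ((1 - Rt) * M).trace - U.inf' hUne (fun u => ((1 - Rt * Ra θ u) * M).trace) =
      (1 - Real.cos θ) * U.sup' hUne (fun u => DeltaM M u v) ∧
    ∀ δ : ℝ, δ < (1 - Real.cos θ) * U.sup' hUne (fun u => DeltaM M u v) →
      δ < ((1 - Rt) * M).trace - U.inf' hUne (fun u => ((1 - Rt * Ra θ u) * M).trace) := by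
  subst hRt
  set C := ((1 - ((2 : ℝ) • vecMulVec v v - 1)) * M).trace with hC
  set c := 1 - Real.cos θ with hc
  set S := U.sup' hUne (fun u => DeltaM M u v) with hS
  have hcnn : 0 ≤ c := by
    have := Real.cos_le_one θ; linarith
  have hg : ∀ u ∈ U, ((1 - ((2 : ℝ) • vecMulVec v v - 1) * Ra θ u) * M).trace
      = C - c * DeltaM M u v := by
    intro u hu
    have := key M hMsym v lam hev θ u (hUunit u hu)
    rw [← hc, ← hC] at this
    linarith
  have hinf : U.inf' hUne (fun u => ((1 - ((2 : ℝ) • vecMulVec v v - 1) * Ra θ u) * M).trace)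
      = C - c * S := by
    apply le_antisymm
    · obtain ⟨u0, hu0, hu0eq⟩ := Finset.exists_mem_eq_sup' hUne (fun u => DeltaM M u v)
      calc U.inf' hUne _ ≤ ((1 - ((2 : ℝ) • vecMulVec v v - 1) * Ra θ u0) * M).trace :=
            Finset.inf'_le _ hu0
        _ = C - c * S := by rw [hg u0 hu0, hS, hu0eq]
    · apply Finset.le_inf'
      intro u hu
      rw [hg u hu]
      have h1 : DeltaM M u v ≤ S := Finset.le_sup' (fun u => DeltaM M u v) hu
      nlinarith
  constructor
  · rw [hinf]; ring
  · intro δ hδ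
    rw [hinf]
    linarith
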